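/- If x̂ minimizes the Lasso objective (1/2)‖y − Az‖₂² + λσ‖z‖₁ and the noise w = y − Ax satisfies ‖Aᵀw‖_∞ ≤ κλσ for some κ ∈ (0,1), then ‖x̂‖₁ ≤ κ‖x̂ − x‖₁ + ‖x‖₁. -/

import Mathlib

open Finset Matrix

noncomputable def l1 {N : ℕ} (z : Fin N → ℝ) : ℝ := ∑ i, |z i|
noncomputable def lq {N : ℕ} (q : ℝ) (z : Fin N → ℝ) : ℝ := (∑ i, |z i| ^ q) ^ (1/q)
noncomputable def l2 {m : ℕ} (v : Fin m → ℝ) : ℝ := Real.sqrt (∑ i, (v i)^2)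
noncomputable def linf {N : ℕ} (z : Fin N → ℝ) : ℝ := ⨆ i, |z i|
open scoped Classical in
noncomputable def l0 {N : ℕ} (z : Fin N → ℝ) : ℕ := (Finset.univ.filter (fun i => z i ≠ 0)).card
noncomputable def sparsityQ {N : ℕ} (q : ℝ) (z : Fin N → ℝ) : ℝ := (l1 z / lq q z) ^ (q/(q-1))
noncomputable def cmsv {m N : ℕ} (q s : ℝ) (A : Matrix (Fin m) (Fin N) ℝ) : ℝ :=
  sInf { r | ∃ z : Fin N → ℝ, z ≠ 0 ∧ sparsityQ q z ≤ s ∧ r = l2 (A.mulVec z) / lq q z }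

lemma l2_sq {m : ℕ} (v : Fin m → ℝ) : (l2 v)^2 = ∑ i, (v i)^2 := by
  unfold l2
  exact Real.sq_sqrt (Finset.sum_nonneg fun i _ => sq_nonneg _)

theorem stmt15 {m N : ℕ} (A : Matrix (Fin m) (Fin N) ℝ)
    (x xh : Fin N → ℝ) (w y : Fin m → ℝ) (lam κ : ℝ)
    (hlam : 0 < lam) (hκ0 : 0 < κ) (hκ1 : κ < 1)
    (hy : y = A.mulVec x + w) (hw : linf (A.transpose.mulVec w) ≤ κ * lam)
    (hmin : ∀ z : Fin N → ℝ,
      (1/2) * (l2 (y - A.mulVec xh))^2 + lam * l1 xh ≤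
        (1/2) * (l2 (y - A.mulVec z))^2 + lam * l1 z) :
    l1 xh ≤ κ * l1 (xh - x) + l1 x := by
  set h : Fin N → ℝ := xh - x with hh
  have hyxh : y - A.mulVec xh = w - A.mulVec h := by
    rw [hy, hh, A.mulVec_sub]
    ext i; simp [Pi.sub_apply]; ring
  have hyx : y - A.mulVec x = w := by rw [hy]; ring
  have key := hmin x
  rw [hyxh, hyx, l2_sq, l2_sq] at key
  -- expand the square
  have expand : ∑ i, (w i - A.mulVec h i)^2
      = ∑ i, (w i)^2 - 2 * ∑ i, w i * A.mulVec h i + ∑ i, (A.mulVec h i)^2 := by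
    calc ∑ i, (w i - A.mulVec h i)^2
        = ∑ i, ((w i)^2 - 2 * (w i * A.mulVec h i) + (A.mulVec h i)^2) :=
          Finset.sum_congr rfl (fun i _ => by ring)
      _ = _ := by rw [Finset.sum_add_distrib, Finset.sum_sub_distrib, Finset.mul_sum]
  have hS : ∑ i, w i * A.mulVec h i = ∑ j, A.transpose.mulVec w j * h j := by
    have := Matrix.dotProduct_mulVec w A h
    simpa [dotProduct, Matrix.mulVec_transpose] using this
  -- bound inner product
  have hbdd : ∀ j, |A.transpose.mulVec w j| ≤ κ * lam := by
    intro j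
    have := le_ciSup (f := fun j => |A.transpose.mulVec w j|)
      (Set.Finite.bddAbove (Set.finite_range _)) j
    exact this.trans hw
  have hip : ∑ j, A.transpose.mulVec w j * h j ≤ κ * lam * l1 h := by
    rw [l1, Finset.mul_sum]
    apply Finset.sum_le_sum
    intro j _
    calc A.transpose.mulVec w j * h j ≤ |A.transpose.mulVec w j * h j| := le_abs_self _
      _ = |A.transpose.mulVec w j| * |h j| := abs_mul _ _
      _ ≤ κ * lam * |h j| := by
          apply mul_le_mul_of_nonneg_right (hbdd j) (abs_nonneg _)
  have hAh : (0:ℝ) ≤ ∑ i, (A.mulVec h i)^2 := Finset.sum_nonneg fun i _ => sq_nonneg _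
  simp only [Pi.sub_apply] at key
  have hlx : lam * l1 xh ≤ κ * lam * l1 h + lam * l1 x := by
    nlinarith [key, expand, hS, hip, hAh]
  have h2 : lam * l1 xh ≤ lam * (κ * l1 h + l1 x) := by nlinarith [hlx]
  have : l1 xh ≤ κ * l1 h + l1 x := (mul_le_mul_iff_right₀ hlam).mp h2
  simpa [hh] using this
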